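/- arXiv:1812.02641 — 2 statements merged into one kernel-verified Lean document; each statement's English description precedes it below -/
import Mathlib

section
/- Let T be the associated tree for loop cutset L and edge {i,j}∈E(T). The sum Σ_{x_{L_{j∖i}}} m_{j→i}^{(x_{R_{ji}}, x_{L_{j∖i}})} over configurations of loop cutset nodes all of whose copies are upstream of the edge equals the message m_{j→i}^{(x_{R_{ji}})} computed from the Gibbs distribution on T_{j∖i} with the upstream loop cutset nodes unconditioned (their indicator potentials summed out). -/
open scoped Classical

/-- The product of edge potentials `Ψ k l (x k) (x l)` over the edges `{k,l}` of `G`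
both of whose endpoints lie in the vertex set `C` (each unordered edge is represented
once, by the ordered pair with `k < l`). -/
noncomputable def edgeProd {V 𝒳 : Type} [Fintype V] [LinearOrder V]
    (G : SimpleGraph V) (C : Set V) (Ψ : V → V → 𝒳 → 𝒳 → ℝ) (x : V → 𝒳) : ℝ :=
  ∏ p ∈ Finset.univ.filter
      (fun p : V × V => G.Adj p.1 p.2 ∧ p.1 < p.2 ∧ p.1 ∈ C ∧ p.2 ∈ C),
    Ψ p.1 p.2 (x p.1) (x p.2)

/-- The belief at node `i` with respect to the Gibbs distribution induced on the
subgraph of `G` spanned by the vertex set `C`: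
`Z_i^C(x_i) = Φ_i(x_i) * Σ_{x_{C∖i}} ∏_{{k,l}∈E(C)} Ψ_{kl}(x_k,x_l) ∏_{k∈C,k≠i} Φ_k(x_k)`.
Configurations are represented as functions `x : V → 𝒳` frozen to a default value `x0`
outside of `C`, so that the sum ranges exactly over configurations on `C` with `x i = xi`. -/
noncomputable def belief {V 𝒳 : Type} [Fintype V] [LinearOrder V] [Fintype 𝒳]
    (G : SimpleGraph V) (C : Set V) (Φ : V → 𝒳 → ℝ) (Ψ : V → V → 𝒳 → 𝒳 → ℝ)
    (x0 : 𝒳) (i : V) (xi : 𝒳) : ℝ :=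
  Φ i xi *
    ∑ x ∈ Finset.univ.filter
        (fun x : V → 𝒳 => x i = xi ∧ ∀ v, v ∉ C → x v = x0),
      edgeProd G C Ψ x *
        ∏ v ∈ Finset.univ.filter (fun v => v ∈ C ∧ v ≠ i), Φ v (x v)

/-- The component `G_{a∖b}` of `G` with the edge `{a,b}` removed that contains `a`. -/
def compSet {V : Type} (G : SimpleGraph V) (a b : V) : Set V :=
  {w | (G.deleteEdges {s(a, b)}).Reachable a w}

/-- The Belief Propagation message from `j` to `i`:
`m_{j→i}(x_i) = Σ_{x_j} Ψ_{ji}(x_j, x_i) Z_j^{j∖i}(x_j)`, where `Z_j^{j∖i}` is the belief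
at `j` on the component of `G ∖ {i,j}` containing `j`. -/
noncomputable def msg {V 𝒳 : Type} [Fintype V] [LinearOrder V] [Fintype 𝒳]
    (G : SimpleGraph V) (Φ : V → 𝒳 → ℝ) (Ψ : V → V → 𝒳 → 𝒳 → ℝ)
    (x0 : 𝒳) (j i : V) (xi : 𝒳) : ℝ :=
  ∑ xj : 𝒳, Ψ j i xj xi * belief G (compSet G j i) Φ Ψ x0 j xj

/-! ### Local Conditioning on an associated tree

`T` is the associated tree (on vertex type `W`) for the loop cutset `L ⊆ V` of an
original graph; `π : W → V` sends each tree node to the original node it is a copy of. -/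

/-- Self potentials conditioned on the configuration `x` at (copies of) the nodes of
`S`: the self potential of each copy `w` with `π w ∈ S` is multiplied by the indicator
`δ^{(x (π w))}`. -/
noncomputable def condPhi {W V 𝒳 : Type} (π : W → V) (Φ : W → 𝒳 → ℝ)
    (S : Finset V) (x : V → 𝒳) : W → 𝒳 → ℝ :=
  fun w a => if π w ∈ S then (if a = x (π w) then Φ w a else 0) else Φ w a

/-- The BP message from `j` to `i` on the associated tree `T`, conditioned (via
indicator-modified self potentials) on the configuration `x` at the nodes of `S`. -/
noncomputable def condMsg {W V 𝒳 : Type} [Fintype W] [LinearOrder W] [Fintype 𝒳]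
    (T : SimpleGraph W) (π : W → V) (Φ : W → 𝒳 → ℝ) (Ψ : W → W → 𝒳 → 𝒳 → ℝ)
    (x0 : 𝒳) (S : Finset V) (x : V → 𝒳) (j i : W) (xi : 𝒳) : ℝ :=
  msg T (condPhi π Φ S x) Ψ x0 j i xi

/-- `Lside T π L a b` is `L_{a∖b}`: the loop cutset nodes *all of whose copies* lie in
the component `T_{a∖b}` of `T` minus the edge `{a,b}` containing `a`. -/
noncomputable def Lside {W V : Type} (T : SimpleGraph W) (π : W → V)
    (L : Finset V) (a b : W) : Finset V :=
  L.filter (fun l => ∀ w : W, π w = l → w ∈ compSet T a b)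

/-- `Rset T π L a b` is the relevant set `R_{ab} = L ∖ (L_{a∖b} ∪ L_{b∖a})` of the edge
`{a,b}` of the associated tree. -/
noncomputable def Rset {W V : Type} [DecidableEq V] (T : SimpleGraph W) (π : W → V)
    (L : Finset V) (a b : W) : Finset V :=
  L \ (Lside T π L a b ∪ Lside T π L b a)

/-- Overwrite the configuration `x : V → 𝒳` by the configuration `y` on `S`. -/
def patch {V 𝒳 : Type} [DecidableEq V] (x : V → 𝒳) (S : Finset V) (y : {v // v ∈ S} → 𝒳) : V → 𝒳 :=
  fun v => if h : v ∈ S then y ⟨v, h⟩ else x v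

/-- The reduced message `m_{j→i}^{(x_{R_{ji}})}`: the sum of the fully conditioned
messages over all configurations of the upstream loop cutset nodes `L_{j∖i}` (the
remaining conditioning values being given by `x`). -/
noncomputable def redMsg {W V 𝒳 : Type} [Fintype W] [LinearOrder W] [Fintype 𝒳]
    (T : SimpleGraph W) (π : W → V) (L : Finset V)
    (Φ : W → 𝒳 → ℝ) (Ψ : W → W → 𝒳 → 𝒳 → ℝ) (x0 : 𝒳)
    (j i : W) (x : V → 𝒳) (xi : 𝒳) : ℝ :=
  ∑ y : {v // v ∈ Lside T π L j i} → 𝒳,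
    condMsg T π Φ Ψ x0 L (patch x (Lside T π L j i) y) j i xi

/-- The indicator that all copies of the original node `l` agree in the tree
configuration `z : W → 𝒳` — this is what remains of the conditioning indicator
potentials of `l` after its value has been summed out. -/
noncomputable def eqInd {W V 𝒳 : Type} (π : W → V) (l : V) (z : W → 𝒳) : ℝ :=
  if ∀ w w' : W, π w = l → π w' = l → z w = z w' then 1 else 0

/-- The belief at `j` on the subgraph spanned by `C`, with an extra weight `ρ`
multiplying each configuration (used for summed-out equality-constraint potentials). -/
noncomputable def beliefConstr {W 𝒳 : Type} [Fintype W] [LinearOrder W] [Fintype 𝒳]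
    (T : SimpleGraph W) (C : Set W) (Φ : W → 𝒳 → ℝ) (Ψ : W → W → 𝒳 → 𝒳 → ℝ)
    (ρ : (W → 𝒳) → ℝ) (x0 : 𝒳) (j : W) (xj : 𝒳) : ℝ :=
  Φ j xj *
    ∑ z ∈ Finset.univ.filter
        (fun z : W → 𝒳 => z j = xj ∧ ∀ v, v ∉ C → z v = x0),
      edgeProd T C Ψ z *
        (∏ v ∈ Finset.univ.filter (fun v => v ∈ C ∧ v ≠ j), Φ v (z v)) * ρ z


section AuxLC

variable {W V 𝒳 : Type}

private lemma compSet_self (T : SimpleGraph W) (a b : W) : a ∈ compSet T a b :=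
  SimpleGraph.Reachable.refl a

private lemma not_mem_compSet_swap {T : SimpleGraph W} (hacyc : T.IsAcyclic) {i j v : W}
    (hij : T.Adj i j) (hv : v ∈ compSet T j i) : v ∉ compSet T i j := by
  intro hv'
  have hb := (SimpleGraph.isAcyclic_iff_forall_adj_isBridge.mp hacyc) hij
  rw [SimpleGraph.isBridge_iff] at hb
  apply hb
  have hswap : (s(j, i) : Sym2 W) = s(i, j) := Sym2.eq_swap
  have h1 : (T.deleteEdges {s(i, j)}).Reachable j v := by
    have := hv
    rwa [compSet, Set.mem_setOf_eq, hswap] at this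
  have h2 : (T.deleteEdges {s(i, j)}).Reachable i v := hv'
  exact h2.trans h1.symm

/-- A product over the vertices of `C` splits off the factor at `j ∈ C`. -/
private lemma prod_filter_split [Fintype W] [LinearOrder W] {C : Set W} {j : W} (hj : j ∈ C) (g : W → ℝ) :
    g j * ∏ v ∈ Finset.univ.filter (fun v => v ∈ C ∧ v ≠ j), g v
      = ∏ v ∈ Finset.univ.filter (fun v => v ∈ C), g v := by
  classical
  have h1 : Finset.univ.filter (fun v : W => v ∈ C ∧ v ≠ j)
      = (Finset.univ.filter (fun v : W => v ∈ C)).erase j := by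
    rw [← Finset.filter_filter, Finset.filter_ne']
  rw [h1, Finset.mul_prod_erase]
  simp [hj]

private lemma prod_indicator_eq_ite [Fintype W] [DecidableEq V]
    (π : W → V) (S : Finset V) (z : W → 𝒳) (y : {v // v ∈ S} → 𝒳) :
    (∏ v : W, (if h : π v ∈ S then (if z v = y ⟨π v, h⟩ then (1 : ℝ) else 0) else 1))
      = if (∀ v (h : π v ∈ S), z v = y ⟨π v, h⟩) then 1 else 0 := by
  classical
  by_cases hP : ∀ v (h : π v ∈ S), z v = y ⟨π v, h⟩
  · rw [if_pos hP]
    apply Finset.prod_eq_one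
    intro v _
    by_cases h : π v ∈ S
    · rw [dif_pos h, if_pos (hP v h)]
    · rw [dif_neg h]
  · rw [if_neg hP]
    push_neg at hP
    obtain ⟨v, h, hne⟩ := hP
    refine Finset.prod_eq_zero (Finset.mem_univ v) ?_
    rw [dif_pos h, if_neg hne]

private lemma core_sum [Fintype W] [Fintype 𝒳] [DecidableEq V]
    (π : W → V) (S : Finset V) (hcop : ∀ l ∈ S, ∃ w : W, π w = l) (z : W → 𝒳) :
    (∑ y : {v // v ∈ S} → 𝒳,
        ∏ v : W, (if h : π v ∈ S then (if z v = y ⟨π v, h⟩ then (1 : ℝ) else 0) else 1))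
      = ∏ l ∈ S, eqInd π l z := by
  classical
  simp_rw [prod_indicator_eq_ite]
  by_cases hQ : ∀ l ∈ S, ∀ w w' : W, π w = l → π w' = l → z w = z w'
  · -- exactly one `y` contributes
    set y₀ : {v // v ∈ S} → 𝒳 := fun l => z (Classical.choose (hcop l.1 l.2)) with hy₀
    have hwl : ∀ l : {v // v ∈ S}, π (Classical.choose (hcop l.1 l.2)) = l.1 :=
      fun l => Classical.choose_spec (hcop l.1 l.2)
    have hiff : ∀ y : {v // v ∈ S} → 𝒳,
        (∀ v (h : π v ∈ S), z v = y ⟨π v, h⟩) ↔ y = y₀ := by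
      intro y
      constructor
      · intro hy
        funext l
        have h1 := hy (Classical.choose (hcop l.1 l.2)) (by rw [hwl l]; exact l.2)
        have h2 : (⟨π (Classical.choose (hcop l.1 l.2)), by rw [hwl l]; exact l.2⟩ :
            {v // v ∈ S}) = l := Subtype.ext (hwl l)
        rw [h2] at h1
        rw [hy₀, ← h1]
      · rintro rfl v h
        exact hQ (π v) h v (Classical.choose (hcop (π v) h)) rfl (hwl ⟨π v, h⟩)
    have : (∑ y : {v // v ∈ S} → 𝒳,
        if (∀ v (h : π v ∈ S), z v = y ⟨π v, h⟩) then (1 : ℝ) else 0)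
        = ∑ y : {v // v ∈ S} → 𝒳, if y = y₀ then (1 : ℝ) else 0 := by
      refine Finset.sum_congr rfl fun y _ => ?_
      exact if_congr (hiff y) rfl rfl
    rw [this, Finset.sum_ite_eq' Finset.univ y₀ (fun _ => (1 : ℝ)),
      if_pos (Finset.mem_univ _)]
    symm
    apply Finset.prod_eq_one
    intro l hl
    rw [eqInd, if_pos (hQ l hl)]
  · push_neg at hQ
    obtain ⟨l, hl, w, w', hw, hw', hne⟩ := hQ
    have hzero : ∀ y : {v // v ∈ S} → 𝒳,
        ¬(∀ v (h : π v ∈ S), z v = y ⟨π v, h⟩) := by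
      intro y hy
      have h1 := hy w (by rw [hw]; exact hl)
      have h2 := hy w' (by rw [hw']; exact hl)
      have e1 : (⟨π w, by rw [hw]; exact hl⟩ : {v // v ∈ S})
          = ⟨π w', by rw [hw']; exact hl⟩ := Subtype.ext (hw.trans hw'.symm)
      rw [e1] at h1
      exact hne (h1.trans h2.symm)
    rw [Finset.prod_eq_zero hl (by rw [eqInd, if_neg]; intro h; exact hne (h w w' hw hw'))]
    refine Finset.sum_eq_zero fun y _ => ?_
    rw [if_neg (hzero y)]

end AuxLC

/-- For an edge `{i,j}` of the associated tree `T`, summing the fully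
conditioned messages `m_{j→i}^{(x_{R_{ji}}, x_{L_{j∖i}})}` over the configurations of
the upstream loop cutset nodes `L_{j∖i}` yields exactly the message computed from the
Gibbs distribution on `T_{j∖i}` conditioned only on the relevant set `R_{ji}`, with the
indicator potentials of the upstream loop cutset nodes summed out (leaving, for each
such node, the constraint that all of its copies agree). -/
theorem sum_upstream_conditioned_messages
    {W V 𝒳 : Type} [Fintype W] [LinearOrder W] [Fintype V] [DecidableEq V] [Fintype 𝒳]
    (T : SimpleGraph W) (hconn : T.Connected) (hacyc : T.IsAcyclic)
    (π : W → V) (L : Finset V)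
    (hcopies : ∀ l ∈ L, ∃ w : W, π w = l)
    (Φ : W → 𝒳 → ℝ) (Ψ : W → W → 𝒳 → 𝒳 → ℝ) (x0 : 𝒳)
    (i j : W) (hij : T.Adj i j) (x : V → 𝒳) (xi : 𝒳) :
    ∑ y : {v // v ∈ Lside T π L j i} → 𝒳,
        condMsg T π Φ Ψ x0 L (patch x (Lside T π L j i) y) j i xi
      = ∑ xj : 𝒳, Ψ j i xj xi *
          beliefConstr T (compSet T j i)
            (condPhi π Φ (Rset T π L j i) x) Ψ
            (fun z => ∏ l ∈ Lside T π L j i, eqInd π l z) x0 j xj := by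
  have hjC : j ∈ compSet T j i := compSet_self T j i
  have hSL : ∀ l ∈ Lside T π L j i, l ∈ L := by
    intro l hl
    simp only [Lside, Finset.mem_filter] at hl
    exact hl.1
  have hcop : ∀ l ∈ Lside T π L j i, ∃ w : W, π w = l := fun l hl => hcopies l (hSL l hl)
  have hcopyC : ∀ v : W, π v ∈ Lside T π L j i → v ∈ compSet T j i := by
    intro v hv
    simp only [Lside, Finset.mem_filter] at hv
    exact hv.2 v rfl
  have hRS : ∀ l ∈ Rset T π L j i, l ∉ Lside T π L j i := by
    intro l hl hlS
    exact (Finset.mem_sdiff.mp hl).2 (Finset.mem_union_left _ hlS)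
  have hRL : ∀ l ∈ Rset T π L j i, l ∈ L := fun l hl => (Finset.mem_sdiff.mp hl).1
  have hmemR : ∀ v : W, v ∈ compSet T j i → π v ∈ L → π v ∉ Lside T π L j i →
      π v ∈ Rset T π L j i := by
    intro v hvC hvL hvS
    rw [Rset, Finset.mem_sdiff]
    refine ⟨hvL, ?_⟩
    rw [Finset.mem_union]
    rintro (h | h)
    · exact hvS h
    · simp only [Lside, Finset.mem_filter] at h
      exact not_mem_compSet_swap hacyc hij hvC (h.2 v rfl)
  -- pointwise factorization of the conditioned potentials on `C`
  have hfac : ∀ (y : {v // v ∈ Lside T π L j i} → 𝒳) (v : W), v ∈ compSet T j i → ∀ a : 𝒳,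
      condPhi π Φ L (patch x (Lside T π L j i) y) v a
        = condPhi π Φ (Rset T π L j i) x v a *
            (if h : π v ∈ Lside T π L j i then (if a = y ⟨π v, h⟩ then 1 else 0) else 1) := by
    intro y v hvC a
    by_cases hL : π v ∈ L
    · by_cases hvS : π v ∈ Lside T π L j i
      · have hvR : π v ∉ Rset T π L j i := fun h => hRS _ h hvS
        simp only [condPhi, patch, hL, if_true, hvR, if_false, dif_pos hvS]
        split <;> simp
      · have hvR : π v ∈ Rset T π L j i := hmemR v hvC hL hvS
        simp only [condPhi, patch, hL, if_true, hvR, dif_neg hvS]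
        ring
    · have hvS : π v ∉ Lside T π L j i := fun h => hL (hSL _ h)
      have hvR : π v ∉ Rset T π L j i := fun h => hL (hRL _ h)
      simp only [condPhi, hL, if_false, hvR, dif_neg hvS]
      ring
  simp only [condMsg, msg, belief, beliefConstr]
  rw [Finset.sum_comm]
  refine Finset.sum_congr rfl fun xj _ => ?_
  rw [← Finset.mul_sum]
  congr 1
  simp_rw [Finset.mul_sum]
  rw [Finset.sum_comm]
  refine Finset.sum_congr rfl fun z hz => ?_
  have hzj : z j = xj := (Finset.mem_filter.mp hz).2.1
  rw [← hzj]
  -- now the per-configuration identity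
  have key : ∀ y : {v // v ∈ Lside T π L j i} → 𝒳,
      condPhi π Φ L (patch x (Lside T π L j i) y) j (z j) *
          ∏ v ∈ Finset.univ.filter (fun v => v ∈ compSet T j i ∧ v ≠ j),
            condPhi π Φ L (patch x (Lside T π L j i) y) v (z v)
        = (∏ v ∈ Finset.univ.filter (fun v => v ∈ compSet T j i),
              condPhi π Φ (Rset T π L j i) x v (z v)) *
            ∏ v : W, (if h : π v ∈ Lside T π L j i then
              (if z v = y ⟨π v, h⟩ then (1 : ℝ) else 0) else 1) := by
    intro y
    rw [prod_filter_split hjC (fun v => condPhi π Φ L (patch x (Lside T π L j i) y) v (z v))]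
    rw [Finset.prod_congr rfl (fun v hv => hfac y v (Finset.mem_filter.mp hv).2 (z v))]
    rw [Finset.prod_mul_distrib]
    congr 1
    refine Finset.prod_subset (Finset.filter_subset _ _) ?_
    intro v _ hv
    have : π v ∉ Lside T π L j i := by
      intro h
      exact hv (Finset.mem_filter.mpr ⟨Finset.mem_univ v, hcopyC v h⟩)
    rw [dif_neg this]
  calc
    ∑ y : {v // v ∈ Lside T π L j i} → 𝒳,
        condPhi π Φ L (patch x (Lside T π L j i) y) j (z j) *
          (edgeProd T (compSet T j i) Ψ z *
            ∏ v ∈ Finset.univ.filter (fun v => v ∈ compSet T j i ∧ v ≠ j),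
              condPhi π Φ L (patch x (Lside T π L j i) y) v (z v))
      = ∑ y : {v // v ∈ Lside T π L j i} → 𝒳,
          (edgeProd T (compSet T j i) Ψ z *
            ∏ v ∈ Finset.univ.filter (fun v => v ∈ compSet T j i),
              condPhi π Φ (Rset T π L j i) x v (z v)) *
          ∏ v : W, (if h : π v ∈ Lside T π L j i then
              (if z v = y ⟨π v, h⟩ then (1 : ℝ) else 0) else 1) := by
        refine Finset.sum_congr rfl fun y _ => ?_
        rw [show ∀ a b c : ℝ, a * (b * c) = b * (a * c) from fun a b c => by ring,
          key y, ← mul_assoc]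
    _ = (edgeProd T (compSet T j i) Ψ z *
            ∏ v ∈ Finset.univ.filter (fun v => v ∈ compSet T j i),
              condPhi π Φ (Rset T π L j i) x v (z v)) *
          ∏ l ∈ Lside T π L j i, eqInd π l z := by
        rw [← Finset.mul_sum, core_sum π (Lside T π L j i) hcop z]
    _ = condPhi π Φ (Rset T π L j i) x j (z j) *
          (edgeProd T (compSet T j i) Ψ z *
            (∏ v ∈ Finset.univ.filter (fun v => v ∈ compSet T j i ∧ v ≠ j),
              condPhi π Φ (Rset T π L j i) x v (z v)) *
            ∏ l ∈ Lside T π L j i, eqInd π l z) := by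
        rw [← prod_filter_split hjC (fun v => condPhi π Φ (Rset T π L j i) x v (z v))]
        ring
end

section
/- Local Conditioning belief correctness: for a node i of the associated tree T with neighbors j_1,…,j_n, the unconditioned belief satisfies Z_i = Σ_{x_{R_i}} Φ_i ∏_{m=1}^{n} m_{j_m→i}^{(x_{R_{j_m,i}})}, where each m_{j_m→i}^{(x_{R_{j_m,i}})} = Σ_{x_{L_{j_m∖i}}} m_{j_m→i}^{(x_{R_{j_m,i}}, x_{L_{j_m∖i}})} and messages conditioned on fewer variables are obtained by the independence of messages from downstream loop cutset nodes. -/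
open scoped Classical

/-! ### Auxiliary lemmas -/

section GraphAux

open SimpleGraph

variable {W : Type} {T : SimpleGraph W}

lemma mem_compSet_iff (T : SimpleGraph W) (a b w : W) :
    w ∈ compSet T a b ↔ ∃ p : T.Walk a w, s(a, b) ∉ p.edges := by
  constructor
  · rintro ⟨p⟩
    refine ⟨p.map (Hom.ofLE (T.deleteEdges_le _)), ?_⟩
    simp_rw [Walk.edges_map, List.mem_map, Hom.ofLE_apply, Sym2.map_id', id]
    rintro ⟨e, h, rfl⟩
    have h2 := p.edges_subset_edgeSet h
    rw [edgeSet_deleteEdges] at h2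
    exact h2.2 rfl
  · rintro ⟨p, h⟩
    exact ⟨p.toDeleteEdges _ (fun e he => by
      rw [Set.mem_singleton_iff]; rintro rfl; exact h he)⟩

lemma bridge_walk (hacyc : T.IsAcyclic) {a b : W} (hab : T.Adj a b) :
    ∀ p : T.Walk a b, s(a, b) ∈ p.edges :=
  ((isBridge_iff_adj_and_forall_walk_mem_edges).mp
    (isAcyclic_iff_forall_edge_isBridge.mp hacyc (T.mem_edgeSet.mpr hab)))

lemma not_mem_compSet_self (hacyc : T.IsAcyclic) {j i : W} (hji : T.Adj j i) :
    i ∉ compSet T j i := by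
  rw [mem_compSet_iff]
  rintro ⟨p, hp⟩
  exact hp (bridge_walk hacyc hji p)

lemma compSet_disjoint' (hacyc : T.IsAcyclic) {j i : W} (hji : T.Adj j i) {w : W}
    (h1 : w ∈ compSet T j i) (h2 : w ∈ compSet T i j) : False := by
  rw [mem_compSet_iff] at h1 h2
  obtain ⟨p, hp⟩ := h1
  obtain ⟨q, hq⟩ := h2
  have hb := bridge_walk hacyc hji (p.append q.reverse)
  rw [Walk.edges_append, List.mem_append, Walk.edges_reverse, List.mem_reverse] at hb
  rcases hb with h | h
  · exact hp h
  · exact hq (by rwa [Sym2.eq_swap] at h)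

lemma exists_walk_avoid [DecidableEq W] (hacyc : T.IsAcyclic) {j i w : W} (hji : T.Adj j i)
    (h : w ∈ compSet T j i) : ∃ p : T.Walk j w, s(j, i) ∉ p.edges ∧ i ∉ p.support := by
  rw [mem_compSet_iff] at h
  obtain ⟨p, hp⟩ := h
  by_cases hi : i ∈ p.support
  · exact absurd (p.edges_takeUntil_subset hi (bridge_walk hacyc hji (p.takeUntil i hi))) hp
  · exact ⟨p, hp, hi⟩

lemma compSet_subset [DecidableEq W] (hacyc : T.IsAcyclic) {i j j' : W} (hji : T.Adj j i)
    (hj'i : T.Adj j' i) (hne : j ≠ j') : compSet T j i ⊆ compSet T i j' := by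
  intro w hw
  obtain ⟨p, hp, hip⟩ := exists_walk_avoid hacyc hji hw
  rw [mem_compSet_iff]
  refine ⟨Walk.cons hji.symm p, ?_⟩
  rw [Walk.edges_cons, List.mem_cons]
  rintro (he | he)
  · rw [Sym2.eq_iff] at he
    rcases he with ⟨-, h2⟩ | ⟨h1, -⟩
    · exact hne h2.symm
    · exact hji.ne h1.symm
  · exact hip (p.fst_mem_support_of_mem_edges he)

lemma walk_stay {i j : W} : ∀ {u w : W} (_ : T.Walk u w),
    u ∈ compSet T i j ∪ compSet T j i → w ∈ compSet T i j ∪ compSet T j i := by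
  intro u w p
  induction p with
  | nil => exact id
  | @cons u u' w h q ih =>
    intro hu
    apply ih
    by_cases he : s(u, u') = s(i, j)
    · rw [Sym2.eq_iff] at he
      rcases he with ⟨-, rfl⟩ | ⟨-, rfl⟩
      · exact Or.inr (Reachable.refl _)
      · exact Or.inl (Reachable.refl _)
    · rcases hu with hu | hu
      · exact Or.inl (Reachable.trans hu (Adj.reachable (by
          rw [deleteEdges_adj]; exact ⟨h, by rwa [Set.mem_singleton_iff]⟩)))
      · refine Or.inr (Reachable.trans hu (Adj.reachable (by
          rw [deleteEdges_adj]
          refine ⟨h, ?_⟩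
          rw [Set.mem_singleton_iff]
          intro hc
          exact he (by rw [hc, Sym2.eq_swap]))))

lemma compSet_cover (hconn : T.Connected) (i j w : W) :
    w ∈ compSet T i j ∪ compSet T j i := by
  obtain ⟨p⟩ := hconn.preconnected i w
  exact walk_stay p (Or.inl (Reachable.refl i))

lemma exists_neighbor_comp (hconn : T.Connected) {i w : W} (hw : w ≠ i) :
    ∃ j, T.Adj i j ∧ w ∈ compSet T j i := by
  obtain ⟨p⟩ := hconn.preconnected i w
  obtain ⟨p', hp'⟩ := p.toPath
  cases p' with
  | nil => exact (hw rfl).elim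
  | @cons _ u' _ h q =>
    rw [Walk.cons_isPath_iff] at hp'
    refine ⟨u', h, ?_⟩
    rw [mem_compSet_iff]
    refine ⟨q, fun he => hp'.2 (q.snd_mem_support_of_mem_edges he)⟩

end GraphAux


section SumAux

variable {V 𝒳 : Type} [Fintype V] [DecidableEq V] [Fintype 𝒳]

lemma patch_mem {x' : V → 𝒳} {C : Finset V} {y : {v // v ∈ C} → 𝒳} {v : V} (h : v ∈ C) :
    patch x' C y v = y ⟨v, h⟩ := dif_pos h

lemma patch_not_mem {x' : V → 𝒳} {C : Finset V} {y : {v // v ∈ C} → 𝒳} {v : V} (h : v ∉ C) :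
    patch x' C y v = x' v := dif_neg h

/-- `Tsum x' C f` sums `f` over all configurations obtained from `x'` by freely varying
the values on `C`. -/
noncomputable def Tsum (x' : V → 𝒳) (C : Finset V) (f : (V → 𝒳) → ℝ) : ℝ :=
  ∑ y : {v // v ∈ C} → 𝒳, f (patch x' C y)

/-- Splitting configurations on a disjoint union. -/
noncomputable def splitEquiv (C D : Finset V) (hCD : Disjoint C D) :
    ({v // v ∈ C ∪ D} → 𝒳) ≃ (({v // v ∈ C} → 𝒳) × ({v // v ∈ D} → 𝒳)) where
  toFun y := (fun v => y ⟨v.1, Finset.mem_union_left _ v.2⟩,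
              fun v => y ⟨v.1, Finset.mem_union_right _ v.2⟩)
  invFun p v := if h : v.1 ∈ C then p.1 ⟨v.1, h⟩
    else p.2 ⟨v.1, (Finset.mem_union.mp v.2).resolve_left h⟩
  left_inv y := by
    funext v
    dsimp only
    split <;> rfl
  right_inv p := by
    ext v
    · exact dif_pos v.2
    · dsimp only
      rw [dif_neg (Finset.disjoint_right.mp hCD v.2)]

lemma Tsum_union {x' : V → 𝒳} {C D E : Finset V} (hCD : Disjoint C D) (hE : E = C ∪ D)
    (f : (V → 𝒳) → ℝ) : Tsum x' E f = Tsum x' C (fun g => Tsum g D f) := by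
  subst hE
  unfold Tsum
  refine Eq.trans (Fintype.sum_equiv (splitEquiv C D hCD) _
    (fun p => f (patch (patch x' C p.1) D p.2)) (fun y => ?_))
    (Fintype.sum_prod_type _)
  congr 1
  funext v
  by_cases hD : v ∈ D
  · rw [patch_mem (Finset.mem_union_right _ hD), patch_mem hD]
    simp only [splitEquiv, Equiv.coe_fn_mk]
  · rw [patch_not_mem hD]
    by_cases hC : v ∈ C
    · rw [patch_mem (Finset.mem_union_left _ hC), patch_mem hC]
      simp only [splitEquiv, Equiv.coe_fn_mk]
    · rw [patch_not_mem (by simp [hC, hD]), patch_not_mem hC]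

lemma Tsum_congr_base {x₁ x₂ : V → 𝒳} {C : Finset V} {f : (V → 𝒳) → ℝ}
    (h : ∀ y : {v // v ∈ C} → 𝒳, f (patch x₁ C y) = f (patch x₂ C y)) :
    Tsum x₁ C f = Tsum x₂ C f :=
  Finset.sum_congr rfl fun y _ => h y

lemma Tsum_congr {x' : V → 𝒳} {C : Finset V} {f g : (V → 𝒳) → ℝ}
    (h : ∀ y : {v // v ∈ C} → 𝒳, f (patch x' C y) = g (patch x' C y)) :
    Tsum x' C f = Tsum x' C g :=
  Finset.sum_congr rfl fun y _ => h y

/-- Factorization of a sum of a product of functions with disjoint dependence sets. -/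
lemma Tsum_factor {ι : Type} [DecidableEq ι] (A : ι → Finset V) (M : ι → (V → 𝒳) → ℝ)
    (D : ι → Finset V) (N : Finset ι) :
    ∀ (_ : ∀ j ∈ N, ∀ j' ∈ N, j ≠ j' → Disjoint (A j) (A j'))
      (_ : ∀ j ∈ N, ∀ g h : V → 𝒳, (∀ v ∈ D j, g v = h v) → M j g = M j h)
      (_ : ∀ j ∈ N, ∀ j' ∈ N, j ≠ j' → Disjoint (D j) (A j'))
      (x' : V → 𝒳),
      Tsum x' (N.biUnion A) (fun g => ∏ j ∈ N, M j g) = ∏ j ∈ N, Tsum x' (A j) (M j) := by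
  induction N using Finset.induction_on with
  | empty =>
    intro _ _ _ x'
    simp only [Finset.biUnion_empty, Finset.prod_empty, Tsum]
    have : IsEmpty {v // v ∈ (∅ : Finset V)} := ⟨fun v => Finset.notMem_empty v.1 v.2⟩
    rw [Finset.sum_const]
    simp
    exact Finset.card_eq_one.mpr ⟨fun v => (this.false v).elim,
      Finset.eq_singleton_iff_unique_mem.mpr ⟨Finset.mem_univ _, fun y _ => funext fun v => (this.false v).elim⟩⟩
  | @insert a s ha ih =>
    intro hdisj hdep hDA x'
    have hmem : ∀ j ∈ s, j ∈ insert a s := fun j hj => Finset.mem_insert_of_mem hj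
    have hane : ∀ j ∈ s, a ≠ j := fun j hj h => ha (h ▸ hj)
    have hAa : Disjoint (A a) (s.biUnion A) := by
      rw [Finset.disjoint_biUnion_right]
      exact fun j hj => hdisj a (Finset.mem_insert_self a s) j (hmem j hj) (hane j hj)
    rw [Tsum_union hAa (Finset.biUnion_insert)]
    have step : ∀ y : {v // v ∈ A a} → 𝒳,
        Tsum (patch x' (A a) y) (s.biUnion A) (fun g => ∏ j ∈ insert a s, M j g)
          = M a (patch x' (A a) y) * ∏ j ∈ s, Tsum x' (A j) (M j) := by
      intro y
      set g := patch x' (A a) y with hg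
      have pull : Tsum g (s.biUnion A) (fun h => ∏ j ∈ insert a s, M j h)
          = M a g * Tsum g (s.biUnion A) (fun h => ∏ j ∈ s, M j h) := by
        rw [Tsum, Tsum, Finset.mul_sum]
        refine Finset.sum_congr rfl fun z _ => ?_
        rw [Finset.prod_insert ha]
        congr 1
        refine hdep a (Finset.mem_insert_self a s) _ _ (fun v hv => ?_)
        refine patch_not_mem (fun hvU => ?_)
        obtain ⟨j, hj, hvj⟩ := Finset.mem_biUnion.mp hvU
        exact Finset.disjoint_left.mp
          (hDA a (Finset.mem_insert_self a s) j (hmem j hj) (hane j hj)) hv hvj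
      rw [pull, ih (fun j hj j' hj' => hdisj j (hmem j hj) j' (hmem j' hj'))
        (fun j hj => hdep j (hmem j hj))
        (fun j hj j' hj' => hDA j (hmem j hj) j' (hmem j' hj')) g]
      congr 1
      refine Finset.prod_congr rfl fun j hj => ?_
      refine Tsum_congr_base fun z => ?_
      refine hdep j (hmem j hj) _ _ (fun v hv => ?_)
      by_cases hvA : v ∈ A j
      · rw [patch_mem hvA, patch_mem hvA]
      · rw [patch_not_mem hvA, patch_not_mem hvA, hg]
        refine patch_not_mem (fun hva => ?_)
        exact Finset.disjoint_left.mp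
          (hDA j (hmem j hj) a (Finset.mem_insert_self a s) (Ne.symm (hane j hj))) hv hva
    rw [Tsum]
    rw [Finset.sum_congr rfl (fun y _ => step y), ← Finset.sum_mul, Finset.prod_insert ha]
    rfl

end SumAux


lemma mem_Lside_iff {W V : Type} (T : SimpleGraph W) (π : W → V) (L : Finset V) (a b : W)
    (l : V) : l ∈ Lside T π L a b ↔ l ∈ L ∧ ∀ w : W, π w = l → w ∈ compSet T a b := by
  rw [Lside]
  exact Finset.mem_filter

section CongrAux

lemma msg_congr {W 𝒳 : Type} [Fintype W] [LinearOrder W] [Fintype 𝒳] (T : SimpleGraph W)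
    {Φ₁ Φ₂ : W → 𝒳 → ℝ} (Ψ : W → W → 𝒳 → 𝒳 → ℝ) (x0 : 𝒳) (j i : W)
    (h : ∀ w ∈ compSet T j i, Φ₁ w = Φ₂ w) (xi : 𝒳) :
    msg T Φ₁ Ψ x0 j i xi = msg T Φ₂ Ψ x0 j i xi := by
  unfold msg belief
  refine Finset.sum_congr rfl fun xj _ => ?_
  have hj : j ∈ compSet T j i := SimpleGraph.Reachable.refl j
  rw [h j hj]
  congr 1
  congr 1
  refine Finset.sum_congr rfl fun c hc => ?_
  congr 1
  refine Finset.prod_congr rfl fun v hv => ?_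
  rw [h v (Finset.mem_filter.mp hv).2.1]

lemma mem_Lside_or_Rset {W V : Type} [DecidableEq V] {T : SimpleGraph W} (hacyc : T.IsAcyclic)
    (π : W → V) (L : Finset V) {j i w : W} (hji : T.Adj j i) (hw : w ∈ compSet T j i)
    (hL : π w ∈ L) : π w ∈ Lside T π L j i ∪ Rset T π L j i := by
  rw [Finset.mem_union]
  by_cases h1 : π w ∈ Lside T π L j i
  · exact Or.inl h1
  · refine Or.inr ?_
    rw [Rset, Finset.mem_sdiff, Finset.mem_union]
    refine ⟨hL, fun hc => ?_⟩
    rcases hc with hc | hc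
    · exact h1 hc
    · exact compSet_disjoint' hacyc hji hw (((mem_Lside_iff T π L i j (π w)).mp hc).2 w rfl)

lemma condMsg_congr {W V 𝒳 : Type} [Fintype W] [LinearOrder W] [DecidableEq V] [Fintype 𝒳]
    {T : SimpleGraph W} (hacyc : T.IsAcyclic) (π : W → V) (L : Finset V)
    (Φ : W → 𝒳 → ℝ) (Ψ : W → W → 𝒳 → 𝒳 → ℝ) (x0 : 𝒳) {j i : W} (hji : T.Adj j i)
    {g h : V → 𝒳} (hgh : ∀ v ∈ Lside T π L j i ∪ Rset T π L j i, g v = h v) (xi : 𝒳) :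
    condMsg T π Φ Ψ x0 L g j i xi = condMsg T π Φ Ψ x0 L h j i xi := by
  refine msg_congr T Ψ x0 j i (fun w hw => ?_) xi
  funext a
  unfold condPhi
  by_cases hL : π w ∈ L
  · rw [if_pos hL, if_pos hL, hgh _ (mem_Lside_or_Rset hacyc π L hji hw hL)]
  · rw [if_neg hL, if_neg hL]

lemma condPhi_congr_val {W V 𝒳 : Type} (π : W → V) (Φ : W → 𝒳 → ℝ) (S : Finset V)
    {x₁ x₂ : V → 𝒳} {i : W} (h : π i ∈ S → x₁ (π i) = x₂ (π i)) (xi : 𝒳) :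
    condPhi π Φ S x₁ i xi = condPhi π Φ S x₂ i xi := by
  unfold condPhi
  by_cases hS : π i ∈ S
  · rw [if_pos hS, if_pos hS, h hS]
  · rw [if_neg hS, if_neg hS]

lemma condPhi_congr_S {W V 𝒳 : Type} (π : W → V) (Φ : W → 𝒳 → ℝ) {S₁ S₂ : Finset V}
    {i : W} (h : π i ∈ S₁ ↔ π i ∈ S₂) (x' : V → 𝒳) (xi : 𝒳) :
    condPhi π Φ S₁ x' i xi = condPhi π Φ S₂ x' i xi := by
  unfold condPhi
  by_cases hS : π i ∈ S₁
  · rw [if_pos hS, if_pos (h.mp hS)]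
  · rw [if_neg hS, if_neg (fun hc => hS (h.mpr hc))]

end CongrAux

section PartitionAux

variable {W V : Type} [Fintype W] [DecidableEq W] [DecidableEq V] {T : SimpleGraph W}

lemma Lside_disjoint (hacyc : T.IsAcyclic) (π : W → V) (L : Finset V)
    (hcopies : ∀ l ∈ L, ∃ w w' : W, w ≠ w' ∧ π w = l ∧ π w' = l) {i j j' : W}
    (hji : T.Adj j i) (hj'i : T.Adj j' i) (hne : j ≠ j') :
    Disjoint (Lside T π L j i) (Lside T π L j' i) := by
  rw [Finset.disjoint_left]
  intro l hl hl'
  obtain ⟨w, w', hne', hw, hw'⟩ := hcopies l ((mem_Lside_iff T π L j i l).mp hl).1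
  have h1 : w ∈ compSet T j i := ((mem_Lside_iff T π L j i l).mp hl).2 w hw
  have h2 : w ∈ compSet T j' i := ((mem_Lside_iff T π L j' i l).mp hl').2 w hw
  exact compSet_disjoint' hacyc hj'i h2 (compSet_subset hacyc hji hj'i hne h1)

lemma Rset_Lside_disjoint (hacyc : T.IsAcyclic) (π : W → V) (L : Finset V) {i j j' : W}
    (hji : T.Adj j i) (hj'i : T.Adj j' i) :
    Disjoint (Rset T π L j i) (Lside T π L j' i) := by
  rw [Finset.disjoint_left]
  intro l hl hl'
  rw [Rset, Finset.mem_sdiff, Finset.mem_union] at hl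
  by_cases hjj : j = j'
  · subst hjj
    exact hl.2 (Or.inl hl')
  · refine hl.2 (Or.inr ?_)
    rw [mem_Lside_iff]
    refine ⟨hl.1, fun w hw => ?_⟩
    exact compSet_subset hacyc hj'i hji (Ne.symm hjj) (((mem_Lside_iff T π L j' i l).mp hl').2 w hw)

lemma L_cover (hconn : T.Connected) (hacyc : T.IsAcyclic) (π : W → V) (L : Finset V)
    (hcopies : ∀ l ∈ L, ∃ w w' : W, w ≠ w' ∧ π w = l ∧ π w' = l) (i : W) :
    L ⊆ (T.neighborFinset i).biUnion (fun j => Rset T π L j i) ∪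
        (T.neighborFinset i).biUnion (fun j => Lside T π L j i) := by
  intro l hl
  obtain ⟨w, w', hne, hw, hw'⟩ := hcopies l hl
  obtain ⟨u, hu, hui⟩ : ∃ u, π u = l ∧ u ≠ i := by
    by_cases hwi : w = i
    · exact ⟨w', hw', fun hc => hne (hwi.trans hc.symm)⟩
    · exact ⟨w, hw, hwi⟩
  obtain ⟨j₀, hj₀, hu0⟩ := exists_neighbor_comp hconn hui
  have hj₀N : j₀ ∈ T.neighborFinset i := (SimpleGraph.mem_neighborFinset (G := T) (v := i) j₀).mpr hj₀
  rw [Finset.mem_union, Finset.mem_biUnion, Finset.mem_biUnion]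
  by_cases hR : l ∈ Rset T π L j₀ i
  · exact Or.inl ⟨j₀, hj₀N, hR⟩
  · have hmem : l ∈ Lside T π L j₀ i ∨ l ∈ Lside T π L i j₀ := by
      by_contra hc
      push_neg at hc
      exact hR (Finset.mem_sdiff.mpr
        ⟨hl, fun h => (Finset.mem_union.mp h).elim hc.1 hc.2⟩)
    rcases hmem with hm | hm
    · exact Or.inr ⟨j₀, hj₀N, hm⟩
    · exact absurd (((mem_Lside_iff T π L i j₀ l).mp hm).2 u hu)
        (fun h => compSet_disjoint' hacyc hj₀.symm hu0 h)

lemma pi_mem_R (hconn : T.Connected) (hacyc : T.IsAcyclic) (π : W → V) (L : Finset V)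
    (hcopies : ∀ l ∈ L, ∃ w w' : W, w ≠ w' ∧ π w = l ∧ π w' = l) {i : W} (hi : π i ∈ L) :
    π i ∈ (T.neighborFinset i).biUnion (fun j => Rset T π L j i) := by
  obtain ⟨w, w', hne, hw, hw'⟩ := hcopies (π i) hi
  obtain ⟨u, hu, hui⟩ : ∃ u, π u = π i ∧ u ≠ i := by
    by_cases hwi : w = i
    · exact ⟨w', hw', fun hc => hne (hwi.trans hc.symm)⟩
    · exact ⟨w, hw, hwi⟩
  obtain ⟨j₀, hj₀, hu0⟩ := exists_neighbor_comp hconn hui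
  rw [Finset.mem_biUnion]
  refine ⟨j₀, (SimpleGraph.mem_neighborFinset (G := T) (v := i) j₀).mpr hj₀, ?_⟩
  rw [Rset, Finset.mem_sdiff, Finset.mem_union]
  refine ⟨hi, fun hc => ?_⟩
  rcases hc with hc | hc
  · exact not_mem_compSet_self hacyc hj₀.symm (((mem_Lside_iff T π L j₀ i (π i)).mp hc).2 i rfl)
  · exact compSet_disjoint' hacyc hj₀.symm hu0 (((mem_Lside_iff T π L i j₀ (π i)).mp hc).2 u hu)

end PartitionAux

lemma patch_irrel {V 𝒳 : Type} (i1 i2 : DecidableEq V) (x : V → 𝒳) (S : Finset V)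
    (y : {v // v ∈ S} → 𝒳) : @patch V 𝒳 i1 x S y = @patch V 𝒳 i2 x S y := by
  funext v
  unfold patch
  by_cases h : v ∈ S
  · rw [dif_pos h, dif_pos h]
  · rw [dif_neg h, dif_neg h]

lemma univ_irrel {α : Type} (i1 i2 : Fintype α) : @Finset.univ α i1 = @Finset.univ α i2 := by
  congr 1
  exact Subsingleton.elim _ _

lemma redMsg_eq_Tsum {W V 𝒳 : Type} [Fintype W] [LinearOrder W] [Fintype V] [DecidableEq V]
    [Fintype 𝒳] (T : SimpleGraph W) (π : W → V) (L : Finset V) (Φ : W → 𝒳 → ℝ)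
    (Ψ : W → W → 𝒳 → 𝒳 → ℝ) (x0 : 𝒳) (j i : W) (x' : V → 𝒳) (xi : 𝒳) :
    redMsg T π L Φ Ψ x0 j i x' xi
      = Tsum x' (Lside T π L j i) (fun h => condMsg T π Φ Ψ x0 L h j i xi) := by
  unfold redMsg Tsum
  refine Finset.sum_congr (univ_irrel _ _) fun y _ => ?_
  exact congrArg (fun t => condMsg T π Φ Ψ x0 L t j i xi) (patch_irrel _ _ _ _ _)

/-- **Local Conditioning belief correctness.** For a node `i` of the
associated tree `T` with neighbors `∂i`, the unconditioned belief
`Z_i = Σ_{x_L} Φ_i^{(x_L)} ∏_{j∈∂i} m_{j→i}^{(x_L)}` equals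
`Σ_{x_{R_i}} Φ_i^{(x_{R_i})} ∏_{j∈∂i} m_{j→i}^{(x_{R_{j,i}})}`, where
`R_i = ⋃_{j∈∂i} R_{j,i}` and each reduced message
`m_{j→i}^{(x_{R_{j,i}})} = Σ_{x_{L_{j∖i}}} m_{j→i}^{(x_{R_{j,i}}, x_{L_{j∖i}})}`
(`redMsg`) is obtained by summing the fully conditioned messages over the upstream
loop cutset configurations. -/
theorem local_conditioning_belief_correctness
    {W V 𝒳 : Type} [Fintype W] [LinearOrder W] [Fintype V] [DecidableEq V] [Fintype 𝒳]
    (T : SimpleGraph W) (hconn : T.Connected) (hacyc : T.IsAcyclic)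
    (π : W → V) (L : Finset V)
    (hcopies : ∀ l ∈ L, ∃ w w' : W, w ≠ w' ∧ π w = l ∧ π w' = l)
    (Φ : W → 𝒳 → ℝ) (Ψ : W → W → 𝒳 → 𝒳 → ℝ) (x0 : 𝒳)
    (i : W) (x : V → 𝒳) (xi : 𝒳) :
    ∑ y : {v // v ∈ L} → 𝒳,
        condPhi π Φ L (patch x L y) i xi *
          ∏ j ∈ T.neighborFinset i, condMsg T π Φ Ψ x0 L (patch x L y) j i xi
      = ∑ z : {v // v ∈ (T.neighborFinset i).biUnion (fun j => Rset T π L j i)} → 𝒳,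
          condPhi π Φ ((T.neighborFinset i).biUnion (fun j => Rset T π L j i))
              (patch x ((T.neighborFinset i).biUnion (fun j => Rset T π L j i)) z) i xi *
            ∏ j ∈ T.neighborFinset i,
              redMsg T π L Φ Ψ x0 j i
                (patch x ((T.neighborFinset i).biUnion (fun j => Rset T π L j i)) z) xi := by
  classical
  have hadj : ∀ j ∈ T.neighborFinset i, T.Adj j i := fun j hj =>
    ((SimpleGraph.mem_neighborFinset (G := T) (v := i) j).mp hj).symm
  have hdisjA : ∀ j ∈ T.neighborFinset i, ∀ j' ∈ T.neighborFinset i, j ≠ j' →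
      Disjoint (Lside T π L j i) (Lside T π L j' i) := fun j hj j' hj' hne =>
    Lside_disjoint hacyc π L hcopies (hadj j hj) (hadj j' hj') hne
  have hRA : Disjoint ((T.neighborFinset i).biUnion (fun j => Rset T π L j i))
      ((T.neighborFinset i).biUnion (fun j => Lside T π L j i)) := by
    rw [Finset.disjoint_biUnion_left]
    intro j hj
    rw [Finset.disjoint_biUnion_right]
    intro j' hj'
    exact Rset_Lside_disjoint hacyc π L (hadj j hj) (hadj j' hj')
  have hcover : L = (T.neighborFinset i).biUnion (fun j => Rset T π L j i)
      ∪ (T.neighborFinset i).biUnion (fun j => Lside T π L j i) := by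
    apply Finset.Subset.antisymm
    · exact L_cover hconn hacyc π L hcopies i
    · intro l hl
      rcases Finset.mem_union.mp hl with h | h
      · obtain ⟨j, hj, hjl⟩ := Finset.mem_biUnion.mp h
        exact Finset.sdiff_subset hjl
      · obtain ⟨j, hj, hjl⟩ := Finset.mem_biUnion.mp h
        exact ((mem_Lside_iff T π L j i l).mp hjl).1
  have hiff : π i ∈ L ↔ π i ∈ (T.neighborFinset i).biUnion (fun j => Rset T π L j i) :=
    ⟨fun h => pi_mem_R hconn hacyc π L hcopies h,
     fun h => by
      obtain ⟨j, hj, hjl⟩ := Finset.mem_biUnion.mp h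
      exact Finset.sdiff_subset hjl⟩
  have hπiA : π i ∉ (T.neighborFinset i).biUnion (fun j => Lside T π L j i) := by
    intro hc
    obtain ⟨j, hj, hjl⟩ := Finset.mem_biUnion.mp hc
    have hiL : π i ∈ L := ((mem_Lside_iff T π L j i (π i)).mp hjl).1
    exact Finset.disjoint_left.mp hRA (hiff.mp hiL) hc
  show Tsum x L (fun g => condPhi π Φ L g i xi * ∏ j ∈ T.neighborFinset i,
      condMsg T π Φ Ψ x0 L g j i xi)
    = Tsum x ((T.neighborFinset i).biUnion (fun j => Rset T π L j i))
      (fun g => condPhi π Φ ((T.neighborFinset i).biUnion (fun j => Rset T π L j i)) g i xi *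
        ∏ j ∈ T.neighborFinset i, redMsg T π L Φ Ψ x0 j i g xi)
  rw [Tsum_union hRA hcover]
  refine Tsum_congr fun z => ?_
  set g : V → 𝒳 := patch x ((T.neighborFinset i).biUnion (fun j => Rset T π L j i)) z
    with hgdef
  show Tsum g ((T.neighborFinset i).biUnion (fun j => Lside T π L j i))
      (fun h => condPhi π Φ L h i xi * ∏ j ∈ T.neighborFinset i,
        condMsg T π Φ Ψ x0 L h j i xi)
    = condPhi π Φ ((T.neighborFinset i).biUnion (fun j => Rset T π L j i)) g i xi *
      ∏ j ∈ T.neighborFinset i, redMsg T π L Φ Ψ x0 j i g xi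
  have step1 : Tsum g ((T.neighborFinset i).biUnion (fun j => Lside T π L j i))
      (fun h => condPhi π Φ L h i xi * ∏ j ∈ T.neighborFinset i,
        condMsg T π Φ Ψ x0 L h j i xi)
    = condPhi π Φ L g i xi *
      Tsum g ((T.neighborFinset i).biUnion (fun j => Lside T π L j i))
        (fun h => ∏ j ∈ T.neighborFinset i, condMsg T π Φ Ψ x0 L h j i xi) := by
    rw [Tsum, Tsum, Finset.mul_sum]
    refine Finset.sum_congr rfl fun y _ => ?_
    congr 1
    exact condPhi_congr_val π Φ L (fun _ => patch_not_mem hπiA) xi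
  have step2 : Tsum g ((T.neighborFinset i).biUnion (fun j => Lside T π L j i))
      (fun h => ∏ j ∈ T.neighborFinset i, condMsg T π Φ Ψ x0 L h j i xi)
    = ∏ j ∈ T.neighborFinset i,
        Tsum g (Lside T π L j i) (fun h => condMsg T π Φ Ψ x0 L h j i xi) :=
    Tsum_factor (fun j => Lside T π L j i) (fun j h => condMsg T π Φ Ψ x0 L h j i xi)
      (fun j => Lside T π L j i ∪ Rset T π L j i) (T.neighborFinset i)
      hdisjA
      (fun j hj g' h' hgh => condMsg_congr hacyc π L Φ Ψ x0 (hadj j hj) hgh xi)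
      (fun j hj j' hj' hne => Finset.disjoint_union_left.mpr
        ⟨hdisjA j hj j' hj' hne, Rset_Lside_disjoint hacyc π L (hadj j hj) (hadj j' hj')⟩)
      g
  rw [step1, step2, condPhi_congr_S π Φ hiff g xi]
  exact congrArg _ (Finset.prod_congr rfl fun j _ => (redMsg_eq_Tsum T π L Φ Ψ x0 j i g xi).symm)
end
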